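/- arXiv:2409.17736 — 2 statements merged into one kernel-verified Lean document; each statement's English description precedes it below -/
import Mathlib

section
/- Let ψ = ψ_c + ψ_e : ℝ^N → ℝ with ψ_c convex and differentiable and -ψ_e convex and differentiable, let M > 0, τ > 0, and let A be symmetric positive semidefinite. If c^{n+1} satisfies (1/(Mτ))(c^{n+1} - c^n) = -A(∇ψ_c(c^{n+1}) + ∇ψ_e(c^n)) and c^{n+1} - c^n lies in the range of A, then ψ(c^{n+1}) ≤ ψ(c^n). -/
open scoped RealInnerProductSpace

private lemma grad_ineq {F : Type*} [NormedAddCommGroup F] [InnerProductSpace ℝ F]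
    [CompleteSpace F] {f : F → ℝ} (hconv : ConvexOn ℝ Set.univ f) {g x : F}
    (hg : HasGradientAt f g x) (y : F) :
    f x + ⟪g, y - x⟫ ≤ f y := by
  set φ : ℝ → ℝ := fun t => f (x + t • (y - x)) with hφ
  have hline : ∀ t : ℝ, (AffineMap.lineMap x y : ℝ →ᵃ[ℝ] F) t = x + t • (y - x) := by
    intro t; simp [AffineMap.lineMap_apply]; abel
  have hconvφ : ConvexOn ℝ Set.univ φ := by
    have := hconv.comp_affineMap (AffineMap.lineMap x y : ℝ →ᵃ[ℝ] F)
    simp only [Set.preimage_univ] at this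
    refine this.congr fun t _ => ?_
    simp [Function.comp, hline t, hφ]
  have hderiv : HasDerivAt φ ⟪g, y - x⟫ 0 := by
    have h1 : HasDerivAt (fun t : ℝ => x + t • (y - x)) (y - x) 0 := by
      simpa using ((hasDerivAt_id (0:ℝ)).smul_const (y - x)).const_add x
    have hx0 : x + (0:ℝ) • (y - x) = x := by simp
    have h2 := (hx0.symm ▸ hg.hasFDerivAt).comp_hasDerivAt 0 h1
    simpa [InnerProductSpace.toDual_apply_apply, hφ, Function.comp_def] using h2
  have hslope := hconvφ.le_slope_of_hasDerivAt (Set.mem_univ (0:ℝ))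
    (Set.mem_univ (1:ℝ)) one_pos hderiv
  have hs : slope φ 0 1 = f y - f x := by
    simp [slope_def_field, hφ]
  rw [hs] at hslope
  linarith

/-- Gradient (energy) stability of the Eyre convex-splitting scheme:
if `ψ = ψ_c + ψ_e` with `ψ_c` convex differentiable and `-ψ_e` convex,
`ψ_e` differentiable, `M, τ > 0`, `A` symmetric positive semidefinite, and
`(1/(Mτ))(c^{n+1} - c^n) = -A(∇ψ_c(c^{n+1}) + ∇ψ_e(c^n))` with
`c^{n+1} - c^n ∈ range A`, then `ψ(c^{n+1}) ≤ ψ(c^n)`. -/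
theorem stmt_9 (N : ℕ)
    (ψc ψe : EuclideanSpace ℝ (Fin N) → ℝ)
    (hψc_conv : ConvexOn ℝ Set.univ ψc) (hψc_diff : Differentiable ℝ ψc)
    (hψe_conc : ConvexOn ℝ Set.univ (fun x => -ψe x)) (hψe_diff : Differentiable ℝ ψe)
    (M τ : ℝ) (hM : 0 < M) (hτ : 0 < τ)
    (A : EuclideanSpace ℝ (Fin N) →ₗ[ℝ] EuclideanSpace ℝ (Fin N))
    (hsym : ∀ x y, ⟪A x, y⟫ = ⟪x, A y⟫)
    (hpsd : ∀ x, 0 ≤ ⟪A x, x⟫)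
    (cn cn1 : EuclideanSpace ℝ (Fin N))
    (hscheme : (1 / (M * τ)) • (cn1 - cn) =
      -(A (gradient ψc cn1 + gradient ψe cn)))
    (hrange : cn1 - cn ∈ LinearMap.range A) :
    ψc cn1 + ψe cn1 ≤ ψc cn + ψe cn := by
  set G := gradient ψc cn1 + gradient ψe cn with hG
  have hMτ : M * τ ≠ 0 := by positivity
  -- cn1 - cn = -(M*τ) • A G
  have hstep : cn1 - cn = (-(M * τ)) • A G := by
    have h := congrArg (fun v => (M * τ) • v) hscheme
    simp only [smul_smul, smul_neg] at h
    rw [mul_one_div, div_self hMτ, one_smul] at h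
    rw [h, neg_smul]
  -- convexity inequality for ψc at cn1
  have h1 : ψc cn1 + ⟪gradient ψc cn1, cn - cn1⟫ ≤ ψc cn :=
    grad_ineq hψc_conv (hψc_diff cn1).hasGradientAt cn
  -- concavity inequality for ψe at cn
  have hgneg : HasGradientAt (fun x => -ψe x) (-(gradient ψe cn)) cn := by
    have := ((hψe_diff cn).hasGradientAt.hasFDerivAt).neg
    rw [hasFDerivAt_iff_hasGradientAt] at this
    simpa [gradient, Pi.neg_def] using this
  have h2 : -ψe cn + ⟪-(gradient ψe cn), cn1 - cn⟫ ≤ -ψe cn1 :=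
    grad_ineq hψe_conc hgneg cn1
  -- the key sign estimate
  have hkey : ⟪G, cn1 - cn⟫ ≤ 0 := by
    rw [hstep, real_inner_smul_right]
    have : (0:ℝ) ≤ ⟪G, A G⟫ := by rw [← hsym]; exact hpsd G
    have h4 := mul_nonneg (mul_pos hM hτ).le this
    linarith
  have hsum : ⟪gradient ψc cn1, cn1 - cn⟫ + ⟪gradient ψe cn, cn1 - cn⟫ = ⟪G, cn1 - cn⟫ := by
    rw [hG, inner_add_left]
  have hflip : ⟪gradient ψc cn1, cn - cn1⟫ = -⟪gradient ψc cn1, cn1 - cn⟫ := by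
    rw [← inner_neg_right]; congr 1; abel
  have hflip2 : ⟪-(gradient ψe cn), cn1 - cn⟫ = -⟪gradient ψe cn, cn1 - cn⟫ := by
    rw [inner_neg_left]
  rw [hflip] at h1
  rw [hflip2] at h2
  linarith
end

section
/- Let a₁,...,a_p ≥ 0 and τ > 0, and define F_p = ∏_{m=1}^{p} (I - (1/(1+τa_m))(I + τÂ)) for a symmetric positive semidefinite matrix Â. Then F_p is a polynomial in Â, and consequently the LIM update c^{n+1} = (I - F_p²)(I + τÂ)^{-1} f̂ is computable using only matrix-vector products with Â (no linear system solves), i.e., (I - F_p²)(I + τÂ)^{-1} is a polynomial in Â. -/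
open Matrix Polynomial

/-- With Chebyshev parameters `a₁ = 0, a₂, …, a_p ≥ 0`, `τ > 0` and a symmetric
positive semidefinite matrix `Â`, the operator
`F_p = ∏_{m=1}^p (I - (1/(1+τ a_m))(I + τÂ))` is a polynomial in `Â`, and the
LIM update operator `(I - F_p²)(I + τÂ)⁻¹` is also a polynomial in `Â`
(hence computable with matrix-vector products only, no linear system solves). -/
theorem stmt_16 (N : ℕ) (p : ℕ) (hp : 1 ≤ p) (a : ℕ → ℝ)
    (ha : ∀ m, 0 ≤ a m) (ha1 : a 0 = 0)
    (τ : ℝ) (hτ : 0 < τ)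
    (Ahat : Matrix (Fin N) (Fin N) ℝ) (hA : Ahat.PosSemidef)
    (Fp : Matrix (Fin N) (Fin N) ℝ)
    (hFp : Fp = ((List.range p).map (fun m =>
      (1 : Matrix (Fin N) (Fin N) ℝ) - (1 / (1 + τ * a m)) • (1 + τ • Ahat))).prod) :
    (∃ q : Polynomial ℝ, Fp = Polynomial.aeval Ahat q) ∧
    (∃ r : Polynomial ℝ,
      ((1 : Matrix (Fin N) (Fin N) ℝ) - Fp ^ 2) * (1 + τ • Ahat)⁻¹ =
        Polynomial.aeval Ahat r) := by
  set g : Polynomial ℝ := ((List.range p).map (fun m =>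
      (1 : Polynomial ℝ) - C (1 / (1 + τ * a m)) * (1 + C τ * X))).prod with hg
  have key : Fp = Polynomial.aeval Ahat g := by
    rw [hFp, hg, map_list_prod, List.map_map]
    congr 1
    ext m
    simp [Algebra.smul_def, Polynomial.algebraMap_eq, mul_add]
  constructor
  · exact ⟨g, key⟩
  · -- g evaluates to 1 at -1/τ
    have hroot : g.eval (-1/τ) = 1 := by
      rw [hg, eval_list_prod, List.map_map]
      apply List.prod_eq_one
      intro x hx
      simp only [List.mem_map, Function.comp] at hx
      obtain ⟨m, _, rfl⟩ := hx
      simp [hτ.ne']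
      field_simp
      norm_num
    have hIsRoot : (1 - g ^ 2).IsRoot (-1/τ) := by
      simp [Polynomial.IsRoot, hroot]
    obtain ⟨s, hs⟩ := (Polynomial.dvd_iff_isRoot.mpr hIsRoot)
    -- 1 + C τ * X = C τ * (X - C (-1/τ))
    have hfac : (1 + C τ * X : Polynomial ℝ) = C τ * (X - C (-1/τ)) := by
      rw [mul_sub, ← C_mul]
      field_simp
      simp only [C_neg, C_1]
      ring
    refine ⟨C τ⁻¹ * s, ?_⟩
    have hdecomp : (1 : Polynomial ℝ) - g ^ 2 = (1 + C τ * X) * (C τ⁻¹ * s) := by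
      have hC : (C τ * C τ⁻¹ : Polynomial ℝ) = 1 := by
        rw [← C_mul, mul_inv_cancel₀ hτ.ne']; simp
      rw [hfac, mul_mul_mul_comm, hC, one_mul, ← hs]
    have haev : (1 : Matrix (Fin N) (Fin N) ℝ) - Fp ^ 2
        = (1 + τ • Ahat) * Polynomial.aeval Ahat (C τ⁻¹ * s) := by
      have h1 : (1 + τ • Ahat) = Polynomial.aeval Ahat (1 + C τ * X) := by
        simp [Algebra.smul_def]
      rw [key, h1, ← _root_.map_mul, ← hdecomp, _root_.map_sub, _root_.map_one, map_pow]
    have hcomm : (1 + τ • Ahat) * Polynomial.aeval Ahat (C τ⁻¹ * s)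
        = Polynomial.aeval Ahat (C τ⁻¹ * s) * (1 + τ • Ahat) := by
      have h1 : (1 + τ • Ahat) = Polynomial.aeval Ahat (1 + C τ * X) := by
        simp [Algebra.smul_def]
      rw [h1, ← _root_.map_mul, mul_comm ((1 : Polynomial ℝ) + C τ * X), _root_.map_mul]
    -- PosDef of 1 + τ • Ahat
    have hsmul : (τ • Ahat).PosSemidef := by
      refine ⟨?_, fun x => ?_⟩
      · show (τ • Ahat)ᴴ = τ • Ahat
        rw [conjTranspose_smul, hA.1]
        simp
      · convert mul_nonneg hτ.le (hA.2 x) using 1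
        simp only [Finsupp.mul_sum, Matrix.smul_apply, smul_eq_mul, star_trivial]
        exact Finsupp.sum_congr fun i _ => Finsupp.sum_congr fun j _ => by ring
    have hpd : (1 + τ • Ahat).PosDef := Matrix.PosDef.add_posSemidef Matrix.PosDef.one hsmul
    rw [haev, hcomm, mul_assoc, Matrix.mul_nonsing_inv _ (Matrix.isUnit_iff_isUnit_det _ |>.1 hpd.isUnit), mul_one]
end
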